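/- Let E be a real inner product space and let s > 0. The functional J : E → ℝ defined by J(x) = (1/2)·‖x − [x]ₛ‖² is Fréchet differentiable at every x ∈ E, and its derivative at x is the continuous linear functional h ↦ ⟪x − [x]ₛ, h⟫; that is, DJ(x) = x − [x]ₛ. -/

import Mathlib

open scoped RealInnerProductSpace

variable {E : Type*} [NormedAddCommGroup E] [InnerProductSpace ℝ E]

noncomputable def ballProj (r : ℝ) (x : E) : E :=
  if ‖x‖ ≤ r then x else (r / ‖x‖) • x

lemma ballProj_of_le {r : ℝ} {x : E} (h : ‖x‖ ≤ r) : ballProj r x = x := if_pos h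

lemma ballProj_of_gt {r : ℝ} {x : E} (h : r < ‖x‖) : ballProj r x = (r / ‖x‖) • x :=
  if_neg (not_le.2 h)

lemma norm_sub_ballProj_of_gt {r : ℝ} (hr : 0 < r) {x : E} (h : r < ‖x‖) :
    ‖x - ballProj r x‖ = ‖x‖ - r := by
  have hx : (0:ℝ) < ‖x‖ := hr.trans h
  rw [ballProj_of_gt h]
  have : x - (r / ‖x‖) • x = (1 - r / ‖x‖) • x := by
    rw [sub_smul, one_smul]
  rw [this, norm_smul, Real.norm_eq_abs, abs_of_nonneg, sub_mul, one_mul,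
    div_mul_cancel₀ _ hx.ne']
  have := (div_le_one hx).2 h.le
  linarith

lemma hasFDerivAt_norm' (x : E) (hx : x ≠ 0) :
    HasFDerivAt (fun y : E => ‖y‖) (innerSL ℝ (‖x‖⁻¹ • x)) x := by
  have hx0 : (0:ℝ) < ‖x‖ := norm_pos_iff.2 hx
  have h1 : HasFDerivAt (fun y : E => ‖y‖ ^ 2) (2 • innerSL ℝ x) x :=
    (hasStrictFDerivAt_norm_sq x).hasFDerivAt
  have h2 : HasDerivAt Real.sqrt (1 / (2 * Real.sqrt (‖x‖ ^ 2))) (‖x‖ ^ 2) :=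
    Real.hasDerivAt_sqrt (by positivity)
  have h3 := h2.comp_hasFDerivAt x h1
  have heq : (fun y : E => Real.sqrt (‖y‖ ^ 2)) = fun y : E => ‖y‖ := by
    funext y; exact Real.sqrt_sq (norm_nonneg y)
  rw [show Real.sqrt ∘ (fun y : E => ‖y‖ ^ 2) = fun y : E => ‖y‖ from
    funext fun y => Real.sqrt_sq (norm_nonneg y)] at h3
  convert h3 using 1
  · rfl
  · rfl
  rw [Real.sqrt_sq (norm_nonneg x)]
  ext y
  simp [real_inner_smul_left, smul_smul]
  ring

theorem hasFDerivAt_half_sq_dist_ballProj (s : ℝ) (hs : 0 < s) (x : E) :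
    HasFDerivAt (fun y : E => (1 / 2 : ℝ) * ‖y - ballProj s y‖ ^ 2)
      (innerSL ℝ (x - ballProj s x)) x := by
  rcases lt_trichotomy ‖x‖ s with hlt | heq | hgt
  · -- interior: J = 0 near x
    have hzero : innerSL ℝ (x - ballProj s x) = 0 := by
      rw [ballProj_of_le hlt.le, sub_self, map_zero]
    rw [hzero]
    have : (fun y : E => (1 / 2 : ℝ) * ‖y - ballProj s y‖ ^ 2) =ᶠ[nhds x]
        fun _ => (0 : ℝ) := by
      filter_upwards [eventually_nhds_iff.2 ⟨{y : E | ‖y‖ < s},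
        fun y hy => hy, isOpen_lt continuous_norm continuous_const, hlt⟩] with y hy
      rw [ballProj_of_le hy.le, sub_self, norm_zero]
      ring
    exact (hasFDerivAt_const (0:ℝ) x).congr_of_eventuallyEq this
  · -- boundary: little-o estimate
    have hproj : ballProj s x = x := ballProj_of_le heq.le
    have hzero : innerSL ℝ (x - ballProj s x) = 0 := by rw [hproj, sub_self, map_zero]
    rw [hzero]
    rw [hasFDerivAt_iff_isLittleO_nhds_zero]
    rw [Asymptotics.isLittleO_iff]
    intro c hc
    filter_upwards [Metric.ball_mem_nhds (0:E) (by linarith : (0:ℝ) < 2 * c)] with h hh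
    simp only [Metric.mem_ball, dist_zero_right] at hh
    have key : ‖(x + h) - ballProj s (x + h)‖ ≤ ‖h‖ := by
      rcases le_or_gt ‖x + h‖ s with h1 | h1
      · rw [ballProj_of_le h1, sub_self, norm_zero]; exact norm_nonneg h
      · rw [norm_sub_ballProj_of_gt hs h1, ← heq]
        have := norm_sub_norm_le (x + h) x
        simpa using this
    simp only [hproj, sub_self, norm_zero, ContinuousLinearMap.zero_apply,
      Real.norm_eq_abs]
    rw [abs_le]
    constructor <;> nlinarith [norm_nonneg ((x + h) - ballProj s (x + h)), norm_nonneg h,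
      sq_nonneg (‖h‖), mul_le_mul key key (norm_nonneg _) (norm_nonneg h)]
  · -- exterior
    have hx0 : (0:ℝ) < ‖x‖ := hs.trans hgt
    have hx : x ≠ 0 := norm_pos_iff.1 hx0
    have h1 := hasFDerivAt_norm' x hx
    have h2 := (((h1.sub_const s).mul (h1.sub_const s)).const_mul (1/2 : ℝ))
    have heq2 : (fun y : E => (1 / 2 : ℝ) * ‖y - ballProj s y‖ ^ 2) =ᶠ[nhds x]
        fun y : E => (1/2 : ℝ) * ((‖y‖ - s) * (‖y‖ - s)) := by
      filter_upwards [eventually_nhds_iff.2 ⟨{y : E | s < ‖y‖},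
        fun y hy => hy, isOpen_lt continuous_const continuous_norm, hgt⟩] with y hy
      rw [norm_sub_ballProj_of_gt hs hy, sq]
    refine HasFDerivAt.congr_of_eventuallyEq ?_ heq2
    convert h2 using 1
    · rfl
    · rfl
    · rfl
    rw [ballProj_of_gt hgt]
    ext y
    simp [real_inner_smul_left, inner_sub_left, smul_smul]
    field_simp
    ring
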